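/- With the notation of the IPM dual problem, the Hessian of the dual objective L(λ) = ⟨s_*(λᵀφ)⟩ − Σ_i λ_iᵀ û_i with respect to λ is H(λ) = ⟨∇u_s(λᵀφ) ⊗ φφᵀ⟩, and if ∇u_s (the Hessian of s_*) is positive definite everywhere and the basis functions φ_1,…,φ_N are linearly independent in L², then H(λ) is symmetric positive definite; hence L is strictly convex. -/

import Mathlib

open MeasureTheory

lemma quad_expand {N m : ℕ} (x : Fin N × Fin m → ℝ) (D : Matrix (Fin m) (Fin m) ℝ)
    (f : Fin N → ℝ) :
    ∑ p : Fin N × Fin m, ∑ q : Fin N × Fin m, x p * (D p.2 q.2 * f p.1 * f q.1 * x q)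
      = dotProduct (fun j => ∑ i, x (i,j) * f i)
          (D.mulVec (fun j => ∑ i, x (i,j) * f i)) := by
  simp only [dotProduct, Matrix.mulVec, Fintype.sum_prod_type,
    Finset.sum_mul, Finset.mul_sum]
  rw [Finset.sum_comm]
  refine Finset.sum_congr rfl fun j _ => ?_
  rw [Finset.sum_comm]
  conv_rhs => rw [Finset.sum_comm]
  refine Finset.sum_congr rfl fun i' _ => ?_
  rw [Finset.sum_comm]
  exact Finset.sum_congr rfl fun k _ => Finset.sum_congr rfl fun i _ => by ring

lemma aux_sstar_strictConvex {m : ℕ} (sstar : (Fin m → ℝ) → ℝ)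
    (us : (Fin m → ℝ) → Fin m → ℝ) (Dus : (Fin m → ℝ) → Matrix (Fin m) (Fin m) ℝ)
    (hgrad : ∀ v, ∃ D : (Fin m → ℝ) →L[ℝ] ℝ, HasFDerivAt sstar D v ∧
      ∀ w, D w = ∑ j, us v j * w j)
    (hhess : ∀ v, ∃ D : (Fin m → ℝ) →L[ℝ] (Fin m → ℝ), HasFDerivAt us D v ∧
      ∀ w j, D w j = ∑ k, Dus v j k * w k)
    (hpos : ∀ v, (Dus v).PosDef) :
    StrictConvexOn ℝ Set.univ sstar := by
  refine ⟨convex_univ, ?_⟩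
  intro x hx y hy hxy a b ha hb hab
  set d : Fin m → ℝ := x - y with hd_def
  have hd : d ≠ 0 := sub_ne_zero.mpr hxy
  set γ : ℝ → (Fin m → ℝ) := fun t => y + t • d with hγ_def
  have hγ : ∀ t, HasDerivAt γ d t := by
    intro t
    have h1 : HasDerivAt (fun t : ℝ => t • d) ((1:ℝ) • d) t :=
      (hasDerivAt_id t).smul_const d
    simpa [hγ_def] using h1.const_add y
  set g : ℝ → ℝ := fun t => ∑ j, us (γ t) j * d j with hg_def
  have hh' : ∀ t, HasDerivAt (fun t => sstar (γ t)) (g t) t := by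
    intro t
    obtain ⟨D, hD, hDw⟩ := hgrad (γ t)
    have := hD.comp_hasDerivAt t (hγ t)
    simpa [Function.comp_def, hg_def, hDw] using this
  have hg' : ∀ t, HasDerivAt g (∑ j, (∑ k, Dus (γ t) j k * d k) * d j) t := by
    intro t
    obtain ⟨D', hD', hD'w⟩ := hhess (γ t)
    have husγ : HasDerivAt (fun t => us (γ t)) (D' d) t := hD'.comp_hasDerivAt t (hγ t)
    have hj : ∀ j, HasDerivAt (fun t => us (γ t) j) (D' d j) t := by
      intro j
      have := (ContinuousLinearMap.proj (R := ℝ) (φ := fun _ : Fin m => ℝ)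
        j).hasFDerivAt.comp_hasDerivAt t husγ
      simpa [Function.comp_def] using this
    have := HasDerivAt.fun_sum (u := (Finset.univ : Finset (Fin m)))
      (A := fun j t => us (γ t) j * d j) (A' := fun j => D' d j * d j)
      (fun j _ => (hj j).mul_const (d j))
    apply this.congr_deriv
    exact Finset.sum_congr rfl fun j _ => by show D' d j * d j = _; rw [hD'w]
  have hderiv : deriv (fun t => sstar (γ t)) = g := funext fun t => (hh' t).deriv
  have hSC : StrictConvexOn ℝ Set.univ (fun t => sstar (γ t)) := by
    apply strictConvexOn_of_deriv2_pos convex_univ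
    · exact (Continuous.continuousOn (by
        rw [continuous_iff_continuousAt]; exact fun t => (hh' t).continuousAt))
    · intro t _
      have : deriv^[2] (fun t => sstar (γ t)) t = ∑ j, (∑ k, Dus (γ t) j k * d k) * d j := by
        simp only [Function.iterate_succ, Function.iterate_zero, Function.comp,
          id_eq, hderiv]
        exact (hg' t).deriv
      rw [this]
      have := (hpos (γ t)).dotProduct_mulVec_pos hd
      simpa [dotProduct, Matrix.mulVec, mul_comm] using this
  have h1 : γ 1 = x := by simp [hγ_def, hd_def]
  have h0 : γ 0 = y := by simp [hγ_def]
  have key := hSC.2 (Set.mem_univ (1:ℝ)) (Set.mem_univ (0:ℝ)) one_ne_zero ha hb hab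
  have harg : γ a = a • x + b • y := by
    have hb' : b = 1 - a := by linarith
    simp only [hγ_def, hd_def, hb']
    module
  simpa [smul_eq_mul, mul_one, mul_zero, add_zero, harg, h1, h0] using key

/-- The Hessian `H(λ) = ⟨∇u_s(λᵀφ) ⊗ φφᵀ⟩` of the IPM dual objective:
if `∇u_s` is positive definite everywhere and the basis functions are
linearly independent in `L²`, then `H(λ)` is symmetric positive definite,
and the dual objective `L` is strictly convex. -/
theorem stmt_6 {N m : ℕ} {Θ : Type*} [MeasurableSpace Θ] (μ : Measure Θ)
    [IsProbabilityMeasure μ]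
    (φ : Θ → Fin N → ℝ) (hφmeas : ∀ i, Measurable fun ξ => φ ξ i)
    (sstar : (Fin m → ℝ) → ℝ) (us : (Fin m → ℝ) → Fin m → ℝ)
    (Dus : (Fin m → ℝ) → Matrix (Fin m) (Fin m) ℝ) (uhat : Fin N → Fin m → ℝ)
    (hgrad : ∀ v, ∃ D : (Fin m → ℝ) →L[ℝ] ℝ, HasFDerivAt sstar D v ∧
      ∀ w, D w = ∑ j, us v j * w j)
    (hhess : ∀ v, ∃ D : (Fin m → ℝ) →L[ℝ] (Fin m → ℝ), HasFDerivAt us D v ∧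
      ∀ w j, D w j = ∑ k, Dus v j k * w k)
    (hpos : ∀ v, (Dus v).PosDef)
    (hindep : ∀ c : Fin N → ℝ, (∀ᵐ ξ ∂μ, ∑ i, c i * φ ξ i = 0) → c = 0)
    (hIntS : ∀ lam : Fin N → Fin m → ℝ,
      Integrable (fun ξ => sstar (fun j => ∑ i, lam i j * φ ξ i)) μ)
    (hIntH : ∀ (lam : Fin N → Fin m → ℝ) (p q : Fin N × Fin m),
      Integrable (fun ξ =>
        Dus (fun j => ∑ i, lam i j * φ ξ i) p.2 q.2 * φ ξ p.1 * φ ξ q.1) μ) :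
    ∀ lam : Fin N → Fin m → ℝ,
      (Matrix.of (fun p q : Fin N × Fin m =>
          ∫ ξ, Dus (fun j => ∑ i, lam i j * φ ξ i) p.2 q.2 * φ ξ p.1 * φ ξ q.1 ∂μ)).PosDef ∧
      StrictConvexOn ℝ Set.univ (fun lam' : Fin N → Fin m → ℝ =>
        (∫ ξ, sstar (fun j => ∑ i, lam' i j * φ ξ i) ∂μ)
          - ∑ i, ∑ j, lam' i j * uhat i j) := by
  have hSCs := aux_sstar_strictConvex sstar us Dus hgrad hhess hpos
  intro lam
  constructor
  · -- PosDef of the Hessian matrix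
    refine Matrix.PosDef.of_dotProduct_mulVec_pos ?_ ?_
    · -- Hermitian
      ext p q
      simp only [Matrix.conjTranspose_apply, Matrix.of_apply, star_trivial]
      refine integral_congr_ae (Filter.Eventually.of_forall fun ξ => ?_)
      have h := (hpos (fun j => ∑ i, lam i j * φ ξ i)).isHermitian.apply p.2 q.2
      rw [star_trivial] at h
      show Dus _ q.2 p.2 * φ ξ q.1 * φ ξ p.1 = Dus _ p.2 q.2 * φ ξ p.1 * φ ξ q.1
      rw [h]; ring
    · intro x hx
      have hxs : star x = x := by funext p; simp
      -- integrability of each summand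
      have hFi : ∀ p q : Fin N × Fin m, Integrable (fun ξ =>
          x p * (Dus (fun j => ∑ i, lam i j * φ ξ i) p.2 q.2 * φ ξ p.1 * φ ξ q.1 * x q)) μ := by
        intro p q
        have := ((hIntH lam p q).mul_const (x q)).const_mul (x p)
        simpa using this
      have key : dotProduct (star x)
            ((Matrix.of (fun p q : Fin N × Fin m =>
              ∫ ξ, Dus (fun j => ∑ i, lam i j * φ ξ i) p.2 q.2 * φ ξ p.1 * φ ξ q.1 ∂μ)).mulVec x)
          = ∫ ξ, dotProduct (fun j => ∑ i, x (i,j) * φ ξ i)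
              ((Dus (fun j => ∑ i, lam i j * φ ξ i)).mulVec
                (fun j => ∑ i, x (i,j) * φ ξ i)) ∂μ := by
        rw [hxs]
        have e1 : dotProduct x
            ((Matrix.of (fun p q : Fin N × Fin m =>
              ∫ ξ, Dus (fun j => ∑ i, lam i j * φ ξ i) p.2 q.2 * φ ξ p.1 * φ ξ q.1 ∂μ)).mulVec x)
            = ∑ p : Fin N × Fin m, ∑ q : Fin N × Fin m, x p *
              ((∫ ξ, Dus (fun j => ∑ i, lam i j * φ ξ i) p.2 q.2 * φ ξ p.1 * φ ξ q.1 ∂μ) * x q) := by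
          simp [dotProduct, Matrix.mulVec, Matrix.of_apply, Finset.mul_sum]
        have e2 : ∑ p : Fin N × Fin m, ∑ q : Fin N × Fin m, x p *
              ((∫ ξ, Dus (fun j => ∑ i, lam i j * φ ξ i) p.2 q.2 * φ ξ p.1 * φ ξ q.1 ∂μ) * x q)
            = ∑ p : Fin N × Fin m, ∑ q : Fin N × Fin m,
              ∫ ξ, x p * (Dus (fun j => ∑ i, lam i j * φ ξ i) p.2 q.2 * φ ξ p.1 * φ ξ q.1 * x q) ∂μ := by
          refine Finset.sum_congr rfl fun p _ => Finset.sum_congr rfl fun q _ => ?_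
          rw [integral_const_mul, integral_mul_const]
        have e3 : ∑ p : Fin N × Fin m, ∑ q : Fin N × Fin m,
              (∫ ξ, x p * (Dus (fun j => ∑ i, lam i j * φ ξ i) p.2 q.2 * φ ξ p.1 * φ ξ q.1 * x q) ∂μ)
            = ∫ ξ, ∑ p : Fin N × Fin m, ∑ q : Fin N × Fin m,
              x p * (Dus (fun j => ∑ i, lam i j * φ ξ i) p.2 q.2 * φ ξ p.1 * φ ξ q.1 * x q) ∂μ := by
          rw [integral_finset_sum _ (fun p _ =>
            integrable_finset_sum _ (fun q _ => hFi p q))]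
          exact Finset.sum_congr rfl fun p _ =>
            (integral_finset_sum _ fun q _ => hFi p q).symm
        rw [e1, e2, e3]
        refine integral_congr_ae (Filter.Eventually.of_forall fun ξ => ?_)
        exact quad_expand x _ _
      rw [key]
      have hQ0 : ∀ ξ, 0 ≤ dotProduct (fun j => ∑ i, x (i,j) * φ ξ i)
          ((Dus (fun j => ∑ i, lam i j * φ ξ i)).mulVec (fun j => ∑ i, x (i,j) * φ ξ i)) := by
        intro ξ
        have := (hpos (fun j => ∑ i, lam i j * φ ξ i)).posSemidef.dotProduct_mulVec_nonneg
          (fun j => ∑ i, x (i,j) * φ ξ i)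
        simpa using this
      have hQint : Integrable (fun ξ => dotProduct (fun j => ∑ i, x (i,j) * φ ξ i)
          ((Dus (fun j => ∑ i, lam i j * φ ξ i)).mulVec (fun j => ∑ i, x (i,j) * φ ξ i))) μ := by
        have h1 : Integrable (fun ξ => ∑ p : Fin N × Fin m, ∑ q : Fin N × Fin m,
            x p * (Dus (fun j => ∑ i, lam i j * φ ξ i) p.2 q.2 * φ ξ p.1 * φ ξ q.1 * x q)) μ :=
          integrable_finset_sum _ fun p _ => integrable_finset_sum _ fun q _ => hFi p q
        exact h1.congr (Filter.Eventually.of_forall fun ξ => quad_expand x _ _)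
      rw [integral_pos_iff_support_of_nonneg hQ0 hQint]
      by_contra hns
      have h0 : μ (Function.support fun ξ => dotProduct (fun j => ∑ i, x (i,j) * φ ξ i)
          ((Dus (fun j => ∑ i, lam i j * φ ξ i)).mulVec
            (fun j => ∑ i, x (i,j) * φ ξ i))) = 0 := by
        exact le_antisymm (not_lt.mp hns) (zero_le)
      have hae : ∀ᵐ ξ ∂μ, dotProduct (fun j => ∑ i, x (i,j) * φ ξ i)
          ((Dus (fun j => ∑ i, lam i j * φ ξ i)).mulVec
            (fun j => ∑ i, x (i,j) * φ ξ i)) = 0 := by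
        rw [ae_iff]
        exact h0
      have hwae : ∀ᵐ ξ ∂μ, (fun j => ∑ i, x (i,j) * φ ξ i) = (0 : Fin m → ℝ) := by
        refine hae.mono fun ξ hQ => ?_
        by_contra hw
        have := (hpos (fun j => ∑ i, lam i j * φ ξ i)).dotProduct_mulVec_pos hw
        rw [show star (fun j => ∑ i, x (i,j) * φ ξ i) = (fun j => ∑ i, x (i,j) * φ ξ i) from
          by funext j; simp] at this
        exact absurd hQ (ne_of_gt this)
      have hcol : ∀ j, (fun i => x (i, j)) = 0 := by
        intro j
        refine hindep _ (hwae.mono fun ξ h => ?_)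
        exact congrFun h j
      exact hx (funext fun p => by
        have := congrFun (hcol p.2) p.1
        simpa using this)
  · -- Strict convexity of the dual objective
    refine ⟨convex_univ, ?_⟩
    intro p hp q hq hpq a b ha hb hab
    -- notation
    have hargeq : ∀ ξ, (fun j => ∑ i, (a • p + b • q) i j * φ ξ i)
        = a • (fun j => ∑ i, p i j * φ ξ i) + b • (fun j => ∑ i, q i j * φ ξ i) := by
      intro ξ; funext j
      simp [Finset.sum_add_distrib, Finset.mul_sum, add_mul, mul_assoc]
    -- f ξ = gap, nonneg, positive where v1 ≠ v2
    set f : Θ → ℝ := fun ξ =>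
      a * sstar (fun j => ∑ i, p i j * φ ξ i) + b * sstar (fun j => ∑ i, q i j * φ ξ i)
        - sstar (fun j => ∑ i, (a • p + b • q) i j * φ ξ i) with hf_def
    have hf0 : ∀ ξ, 0 ≤ f ξ := by
      intro ξ
      simp only [hf_def]
      simp only [hargeq ξ]
      by_cases hv : (fun j => ∑ i, p i j * φ ξ i) = (fun j => ∑ i, q i j * φ ξ i)
      · rw [hv]
        have : a • (fun j => ∑ i, q i j * φ ξ i) + b • (fun j => ∑ i, q i j * φ ξ i)
            = (fun j => ∑ i, q i j * φ ξ i) := by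
          rw [← add_smul, hab, one_smul]
        rw [this]
        have h2 : a * sstar (fun j => ∑ i, q i j * φ ξ i)
            + b * sstar (fun j => ∑ i, q i j * φ ξ i)
            = sstar (fun j => ∑ i, q i j * φ ξ i) := by rw [← add_mul, hab, one_mul]
        linarith
      · have := hSCs.2 (Set.mem_univ _) (Set.mem_univ _) hv ha hb hab
        simp only [smul_eq_mul] at this
        linarith
    have hfpos : ∀ ξ, (fun j => ∑ i, p i j * φ ξ i) ≠ (fun j => ∑ i, q i j * φ ξ i) → 0 < f ξ := by
      intro ξ hv
      simp only [hf_def]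
      simp only [hargeq ξ]
      have := hSCs.2 (Set.mem_univ _) (Set.mem_univ _) hv ha hb hab
      simp only [smul_eq_mul] at this
      linarith
    -- integrability
    have hIcomb : Integrable (fun ξ => sstar (fun j => ∑ i, (a • p + b • q) i j * φ ξ i)) μ :=
      hIntS (a • p + b • q)
    have hIf : Integrable f μ := by
      simp only [hf_def]
      exact (((hIntS p).const_mul a).add ((hIntS q).const_mul b)).sub hIcomb
    -- positivity of ∫ f
    have hSne : μ {ξ | (fun j => ∑ i, p i j * φ ξ i) ≠ (fun j => ∑ i, q i j * φ ξ i)} ≠ 0 := by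
      intro h0
      have haeeq : ∀ᵐ ξ ∂μ, (fun j => ∑ i, p i j * φ ξ i) = (fun j => ∑ i, q i j * φ ξ i) := by
        rw [ae_iff]
        simpa using h0
      apply hpq
      have hdiff : ∀ j, (fun i => p i j - q i j) = 0 := by
        intro j
        refine hindep _ (haeeq.mono fun ξ h => ?_)
        have := congrFun h j
        simp only [sub_mul, Finset.sum_sub_distrib]
        rw [this, sub_self]
      funext i j
      have := congrFun (hdiff j) i
      simpa [sub_eq_zero] using this
    have hIfpos : 0 < ∫ ξ, f ξ ∂μ := by
      rw [integral_pos_iff_support_of_nonneg hf0 hIf]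
      refine lt_of_lt_of_le (pos_iff_ne_zero.mpr hSne) (measure_mono ?_)
      intro ξ hξ
      exact ne_of_gt (hfpos ξ hξ)
    -- put it together
    have hInt : ∫ ξ, f ξ ∂μ
        = a * (∫ ξ, sstar (fun j => ∑ i, p i j * φ ξ i) ∂μ)
          + b * (∫ ξ, sstar (fun j => ∑ i, q i j * φ ξ i) ∂μ)
          - ∫ ξ, sstar (fun j => ∑ i, (a • p + b • q) i j * φ ξ i) ∂μ := by
      simp only [hf_def]
      have hI2 : Integrable (fun ξ => a * sstar (fun j => ∑ i, p i j * φ ξ i)) μ :=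
        (hIntS p).const_mul a
      have hI3 : Integrable (fun ξ => b * sstar (fun j => ∑ i, q i j * φ ξ i)) μ :=
        (hIntS q).const_mul b
      have hI1 : Integrable (fun ξ => a * sstar (fun j => ∑ i, p i j * φ ξ i)
          + b * sstar (fun j => ∑ i, q i j * φ ξ i)) μ := hI2.add hI3
      rw [integral_sub hI1 hIcomb, integral_add hI2 hI3,
        integral_const_mul, integral_const_mul]
    have hlin : ∑ i, ∑ j, (a • p + b • q) i j * uhat i j
        = a * (∑ i, ∑ j, p i j * uhat i j) + b * (∑ i, ∑ j, q i j * uhat i j) := by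
      simp only [Pi.add_apply, Pi.smul_apply, smul_eq_mul, add_mul,
        Finset.sum_add_distrib, Finset.mul_sum]
      congr 1 <;> exact Finset.sum_congr rfl fun i _ => Finset.sum_congr rfl fun j _ => by ring
    simp only [smul_eq_mul]
    rw [hlin] at *
    have := hIfpos
    rw [hInt] at this
    linarith
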